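/- Let F₂ be the free group on {x, y}. Define u₁ = x⁻²y⁻¹x and u_{n+1} = [x u_n x⁻¹, y u_n y⁻¹] (commutator [a,b] = aba⁻¹b⁻¹). Then for every n ≥ 1, u_n lies in the (n−1)-st term F₂^{(n−1)} of the derived series of F₂, and the word length of u_n with respect to {x, y} is at most 4^{n+1}. -/

import Mathlib

/-- `γ` is a product of at most `n` elements of `X ∪ X⁻¹`. -/
def wordLenLE {G : Type*} [Group G] (X : Set G) (γ : G) (n : ℕ) : Prop :=
  ∃ w : List G, w.length ≤ n ∧ (∀ x ∈ w, x ∈ X ∨ x⁻¹ ∈ X) ∧ w.prod = γ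

/-- The generators `x`, `y` of the free group on `{x, y}`. -/
def xgen : FreeGroup Bool := FreeGroup.of false
def ygen : FreeGroup Bool := FreeGroup.of true

open scoped commutatorElement

/-- `u₁ = x⁻²y⁻¹x`, `u_{n+1} = [x u_n x⁻¹, y u_n y⁻¹]`.  (`useq 0` is a dummy value.) -/
def useq : ℕ → FreeGroup Bool
  | 0 => 1
  | 1 => xgen⁻¹ * xgen⁻¹ * (ygen⁻¹ * xgen)
  | (n + 2) => ⁅xgen * useq (n + 1) * xgen⁻¹, ygen * useq (n + 1) * ygen⁻¹⁆

lemma wordLenLE_mul {G : Type*} [Group G] {X : Set G} {a b : G} {m n : ℕ}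
    (ha : wordLenLE X a m) (hb : wordLenLE X b n) : wordLenLE X (a * b) (m + n) := by
  obtain ⟨w₁, h₁, h₁', rfl⟩ := ha
  obtain ⟨w₂, h₂, h₂', rfl⟩ := hb
  exact ⟨w₁ ++ w₂, by simpa using Nat.add_le_add h₁ h₂,
    by intro x hx; rcases List.mem_append.1 hx with h | h; exacts [h₁' x h, h₂' x h],
    by simp⟩

lemma wordLenLE_inv {G : Type*} [Group G] {X : Set G} {a : G} {n : ℕ}
    (ha : wordLenLE X a n) : wordLenLE X a⁻¹ n := by
  obtain ⟨w, h, h', rfl⟩ := ha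
  refine ⟨(w.map Inv.inv).reverse, by simpa using h, ?_, (List.prod_inv_reverse w).symm⟩
  intro x hx
  simp only [List.mem_reverse, List.mem_map] at hx
  obtain ⟨y, hy, rfl⟩ := hx
  rcases h' y hy with h | h
  · exact Or.inr (by simpa using h)
  · exact Or.inl h

lemma wordLenLE_mono {G : Type*} [Group G] {X : Set G} {a : G} {m n : ℕ}
    (ha : wordLenLE X a m) (h : m ≤ n) : wordLenLE X a n := by
  obtain ⟨w, hw, hw', rfl⟩ := ha
  exact ⟨w, hw.trans h, hw', rfl⟩

lemma wordLenLE_x : wordLenLE {xgen, ygen} xgen 1 :=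
  ⟨[xgen], by simp, by simp, by simp⟩

lemma wordLenLE_y : wordLenLE {xgen, ygen} ygen 1 :=
  ⟨[ygen], by simp, by simp, by simp⟩

lemma stmt17_aux (n : ℕ) (hn : 1 ≤ n) :
    useq n ∈ derivedSeries (FreeGroup Bool) (n - 1) ∧
      wordLenLE {xgen, ygen} (useq n) (4 ^ (n + 1) - 8) := by
  induction n with
  | zero => omega
  | succ k ih =>
    rcases Nat.eq_or_lt_of_le hn with h | h
    · have hk : k = 0 := by omega
      subst hk
      constructor
      · simp
      · show wordLenLE {xgen, ygen} (useq 1) (4 ^ 2 - 8)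
        have : wordLenLE {xgen, ygen} (useq 1) 4 := by
          show wordLenLE _ (xgen⁻¹ * xgen⁻¹ * (ygen⁻¹ * xgen)) 4
          exact wordLenLE_mul (wordLenLE_mul (wordLenLE_inv wordLenLE_x)
            (wordLenLE_inv wordLenLE_x)) (wordLenLE_mul (wordLenLE_inv wordLenLE_y) wordLenLE_x)
        exact wordLenLE_mono this (by norm_num)
    · have hk : 1 ≤ k := by omega
      obtain ⟨hd, hw⟩ := ih hk
      obtain ⟨m, rfl⟩ : ∃ m, k = m + 1 := ⟨k - 1, by omega⟩
      have hd' : useq (m + 1) ∈ derivedSeries (FreeGroup Bool) m := by simpa using hd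
      constructor
      · show useq (m + 2) ∈ derivedSeries (FreeGroup Bool) (m + 2 - 1)
        have h1 : xgen * useq (m + 1) * xgen⁻¹ ∈ derivedSeries (FreeGroup Bool) m :=
          (derivedSeries_normal _ _).conj_mem _ hd' _
        have h2 : ygen * useq (m + 1) * ygen⁻¹ ∈ derivedSeries (FreeGroup Bool) m :=
          (derivedSeries_normal _ _).conj_mem _ hd' _
        show ⁅_, _⁆ ∈ derivedSeries (FreeGroup Bool) (m + 1)
        rw [derivedSeries_succ]
        exact Subgroup.commutator_mem_commutator h1 h2
      · have hw' : wordLenLE {xgen, ygen} (useq (m + 1)) (4 ^ (m + 2) - 8) := hw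
        set L := 4 ^ (m + 2) - 8 with hL
        have ha : wordLenLE {xgen, ygen} (xgen * useq (m + 1) * xgen⁻¹) (1 + L + 1) :=
          wordLenLE_mul (wordLenLE_mul wordLenLE_x hw') (wordLenLE_inv wordLenLE_x)
        have hb : wordLenLE {xgen, ygen} (ygen * useq (m + 1) * ygen⁻¹) (1 + L + 1) :=
          wordLenLE_mul (wordLenLE_mul wordLenLE_y hw') (wordLenLE_inv wordLenLE_y)
        have hc : wordLenLE {xgen, ygen} (useq (m + 2)) ((1 + L + 1) + (1 + L + 1) + (1 + L + 1) + (1 + L + 1)) := by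
          show wordLenLE _ ⁅_, _⁆ _
          rw [commutatorElement_def]
          exact wordLenLE_mul (wordLenLE_mul (wordLenLE_mul ha hb) (wordLenLE_inv ha))
            (wordLenLE_inv hb)
        refine wordLenLE_mono hc ?_
        have h8 : 8 ≤ 4 ^ (m + 2) := by
          calc 8 ≤ 16 := by norm_num
          _ = 4 ^ 2 := by norm_num
          _ ≤ 4 ^ (m + 2) := Nat.pow_le_pow_right (by norm_num) (by omega)
        have h4 : 4 ^ (m + 1 + 1 + 1) = 4 ^ (m + 2) * 4 := pow_succ 4 (m + 2)
        omega

theorem stmt17 (n : ℕ) (hn : 1 ≤ n) :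
    useq n ∈ derivedSeries (FreeGroup Bool) (n - 1) ∧
      wordLenLE {xgen, ygen} (useq n) (4 ^ (n + 1)) := by
  obtain ⟨h1, h2⟩ := stmt17_aux n hn
  exact ⟨h1, wordLenLE_mono h2 (Nat.sub_le _ _)⟩
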